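/- Every countable ordinal α admits an order-embedding f : α → ℚ such that for every limit ordinal λ < α, f(λ) = sup{f(β) : β < λ}. -/

import Mathlib

open Ordinal Set Cardinal

private lemma aux_lt_add_one_self (a : Ordinal) : a < a + 1 := by
  rw [Ordinal.add_one_eq_succ]; exact Order.lt_succ a

private lemma aux_lt_add_one_of_le {a b : Ordinal} (h : a ≤ b) : a < b + 1 := by
  rw [Ordinal.add_one_eq_succ]; exact Order.lt_succ_iff.mpr h

private lemma aux_le_of_lt_add_one {a b : Ordinal} (h : a < b + 1) : a ≤ b := by
  rw [Ordinal.add_one_eq_succ] at h; exact Order.lt_succ_iff.mp h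

private lemma aux_add_one_le_of_lt {a b : Ordinal} (h : a < b) : a + 1 ≤ b := by
  rw [Ordinal.add_one_eq_succ]; exact Order.succ_le_iff.mpr h

private lemma aux_not_isLimit_add_one (a : Ordinal) : ¬ Order.IsSuccLimit (a + 1) := by
  rw [Ordinal.add_one_eq_succ]
  intro h
  exact (h.succ_lt (Order.lt_succ a)).false

private lemma key : ∀ (α : Ordinal), α.card ≤ Cardinal.aleph0 → ∀ a b : ℚ, a < b →
    ∃ f : {β : Ordinal // β < α + 1} → ℚ, StrictMono f ∧
      (∀ β, a < f β ∧ f β ≤ b) ∧ (∀ h : α < α + 1, f ⟨α, h⟩ = b) ∧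
      ∀ l : {β : Ordinal // β < α + 1}, Order.IsSuccLimit l.1 →
        IsLUB (f '' {β | β < l}) (f l) := by
  intro α
  induction α using Ordinal.induction with
  | _ α IH =>
  intro hα a b hab
  rcases Ordinal.zero_or_succ_or_isSuccLimit α with h0 | ⟨γ, hγ⟩ | hlim
  · -- zero case
    subst h0
    refine ⟨fun _ => b, ?_, fun β => ⟨hab, le_rfl⟩, fun _ => rfl, ?_⟩
    · intro x y hxy
      exfalso
      have hx : x.1 = 0 := nonpos_iff_eq_zero.mp (aux_le_of_lt_add_one x.2)
      have hy : y.1 = 0 := nonpos_iff_eq_zero.mp (aux_le_of_lt_add_one y.2)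
      have : x.1 < y.1 := hxy
      rw [hx, hy] at this
      exact this.false
    · intro l hl
      exfalso
      have h0 : l.1 = 0 := nonpos_iff_eq_zero.mp (aux_le_of_lt_add_one l.2)
      have := hl.pos
      rw [h0] at this
      exact this.false
  · -- successor case
    have hγ1 : α = γ + 1 := by rw [Ordinal.add_one_eq_succ]; exact hγ.symm
    subst hγ1
    obtain ⟨g, hg_mono, hg_bdd, hg_top, hg_lub⟩ :=
      IH γ (aux_lt_add_one_self γ) (le_trans (Ordinal.card_le_card (aux_lt_add_one_self γ).le) hα)
        a ((a + b) / 2) (by linarith)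
    have hmid_lt : (a + b) / 2 < b := by linarith
    have htopval : ∀ β : {β : Ordinal // β < γ + 1 + 1}, ¬ β.1 < γ + 1 → β.1 = γ + 1 :=
      fun β h => le_antisymm (aux_le_of_lt_add_one β.2) (not_lt.mp h)
    refine ⟨fun β => if h : β.1 < γ + 1 then g ⟨β.1, h⟩ else b, ?_, ?_, ?_, ?_⟩
    · intro x y hxy
      have hxy' : x.1 < y.1 := hxy
      by_cases hy : y.1 < γ + 1
      · have hx : x.1 < γ + 1 := hxy'.trans hy
        simp only [dif_pos hx, dif_pos hy]
        exact hg_mono (show (⟨x.1, hx⟩ : {β // β < γ + 1}) < ⟨y.1, hy⟩ from hxy')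
      · by_cases hx : x.1 < γ + 1
        · simp only [dif_pos hx, dif_neg hy]
          exact lt_of_le_of_lt (hg_bdd ⟨x.1, hx⟩).2 hmid_lt
        · rw [htopval x hx] at hxy'
          exact absurd (htopval y hy).symm (ne_of_lt hxy')
    · intro β
      by_cases h : β.1 < γ + 1
      · simp only [dif_pos h]
        exact ⟨(hg_bdd _).1, (hg_bdd _).2.trans hmid_lt.le⟩
      · simp only [dif_neg h]; exact ⟨hab, le_rfl⟩
    · intro h
      simp only [dif_neg (lt_irrefl (γ + 1))]
    · intro l hl
      have hl1 : l.1 < γ + 1 := by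
        rcases lt_or_eq_of_le (aux_le_of_lt_add_one l.2) with h | h
        · exact h
        · exact absurd (h ▸ hl) (aux_not_isLimit_add_one γ)
      have hset : (fun β : {β : Ordinal // β < γ + 1 + 1} =>
            if h : β.1 < γ + 1 then g ⟨β.1, h⟩ else b) '' {β | β < l}
          = g '' {β | β < ⟨l.1, hl1⟩} := by
        ext x
        constructor
        · rintro ⟨β, hβ, rfl⟩
          have hβ1 : β.1 < γ + 1 := (show β.1 < l.1 from hβ).trans hl1
          exact ⟨⟨β.1, hβ1⟩, show β.1 < l.1 from hβ, by simp only [dif_pos hβ1]⟩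
        · rintro ⟨β, hβ, rfl⟩
          refine ⟨⟨β.1, β.2.trans (aux_lt_add_one_self _)⟩, show β.1 < l.1 from hβ, ?_⟩
          simp only [dif_pos β.2]
      show IsLUB _ (if h : l.1 < γ + 1 then g ⟨l.1, h⟩ else b)
      rw [hset, dif_pos hl1]
      exact hg_lub ⟨l.1, hl1⟩ hl
  · -- limit case
    classical
    have hsucc_lt : ∀ {x : Ordinal}, x < α → x + 1 < α := fun h => by
      rw [Ordinal.add_one_eq_succ]; exact hlim.succ_lt h
    have hcnt : Countable {β : Ordinal // β < α} := by
      have h1 : #(Set.Iio α) ≤ Cardinal.aleph0 := by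
        rw [Ordinal.mk_Iio_ordinal]
        exact (Cardinal.lift_le.mpr hα).trans_eq Cardinal.lift_aleph0
      exact Cardinal.mk_le_aleph0_iff.mp h1
    have hne : Nonempty {β : Ordinal // β < α} := ⟨⟨0, hlim.pos⟩⟩
    obtain ⟨e, he⟩ := exists_surjective_nat {β : Ordinal // β < α}
    -- cofinal increasing sequence
    set s : ℕ → Ordinal := fun n =>
      Nat.rec (motive := fun _ => Ordinal) (e 0).1 (fun n sn => max (sn + 1) (e (n + 1)).1) n
      with hs_def
    have hssucc : ∀ n, s (n + 1) = max (s n + 1) (e (n + 1)).1 := fun n => rfl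
    have hs_lt : ∀ n, s n < α := by
      intro n
      induction n with
      | zero => exact (e 0).2
      | succ n ih => rw [hssucc]; exact max_lt (hsucc_lt ih) (e (n + 1)).2
    have hs_mono : StrictMono s := strictMono_nat_of_lt_succ (fun n => by
      rw [hssucc]; exact lt_of_lt_of_le (aux_lt_add_one_self (s n)) (le_max_left _ _))
    have hs_cof : ∀ β, β < α → ∃ n, β ≤ s n := by
      intro β hβ
      obtain ⟨k, hk⟩ := he ⟨β, hβ⟩
      refine ⟨k, ?_⟩
      have h1 : (e k).1 ≤ s k := by
        cases k with
        | zero => exact le_rfl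
        | succ k => rw [hssucc]; exact le_max_right _ _
      rw [hk] at h1
      exact h1
    -- block starting points
    set p : ℕ → Ordinal := fun n =>
      Nat.rec (motive := fun _ => Ordinal) 0 (fun n _ => s n + 1) n with hp_def
    have hp0 : p 0 = 0 := rfl
    have hpsucc : ∀ n, p (n + 1) = s n + 1 := fun n => rfl
    have hps : ∀ n, p n ≤ s n := by
      intro n
      cases n with
      | zero => exact zero_le (a := _)
      | succ n => rw [hpsucc]; exact aux_add_one_le_of_lt (hs_mono (Nat.lt_succ_self n))
    have hpds : ∀ n, p n + (s n - p n) = s n := fun n => Ordinal.add_sub_cancel_of_le (hps n)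
    -- rational block levels
    set q : ℕ → ℚ := fun n => b - (b - a) / 2 ^ (n + 1) with hq_def
    have hb_a : 0 < b - a := by linarith
    have hq_lt_b : ∀ n, q n < b := by
      intro n
      have h2 : (0:ℚ) < (b - a) / 2 ^ (n + 1) := by positivity
      simp only [hq_def]
      linarith
    have ha_lt_q : ∀ n, a < q n := by
      intro n
      have h1 : (1:ℚ) < 2 ^ (n + 1) := by
        apply one_lt_pow₀ (by norm_num) (Nat.succ_ne_zero n)
      have h2 : (0:ℚ) < 2 ^ (n + 1) := by positivity
      have h3 : (b - a) / 2 ^ (n + 1) < b - a := by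
        rw [div_lt_iff₀ h2]; nlinarith
      simp only [hq_def]
      linarith
    have hq_mono : StrictMono q := strictMono_nat_of_lt_succ (fun n => by
      have h2 : (0:ℚ) < 2 ^ (n + 1) := by positivity
      have h4 : (b - a) / 2 ^ (n + 1 + 1) < (b - a) / 2 ^ (n + 1) := by
        apply div_lt_div_of_pos_left hb_a h2
        apply pow_lt_pow_right₀ (by norm_num) (Nat.lt_succ_self (n + 1))
      simp only [hq_def]
      linarith)
    have hq_unbdd : ∀ c, c < b → ∃ n, c < q n := by
      intro c hc
      obtain ⟨k, hk⟩ := exists_nat_gt ((b - a) / (b - c))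
      refine ⟨k, ?_⟩
      have hbc : (0:ℚ) < b - c := by linarith
      have h2 : (0:ℚ) < 2 ^ (k + 1) := by positivity
      have hk2 : (k:ℚ) < 2 ^ (k + 1) := by
        calc (k:ℚ) < 2 ^ k := by exact_mod_cast Nat.lt_two_pow_self (n := k)
        _ ≤ 2 ^ (k + 1) := by apply pow_le_pow_right₀ (by norm_num) (Nat.le_succ k)
      have h5 : (b - a) / (b - c) < 2 ^ (k + 1) := hk.trans hk2
      rw [div_lt_iff₀ hbc] at h5
      have h6 : (b - a) / 2 ^ (k + 1) < b - c := by
        rw [div_lt_iff₀ h2]; nlinarith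
      simp only [hq_def]
      linarith
    -- block lower bounds
    set lo : ℕ → ℚ := fun n => Nat.rec (motive := fun _ => ℚ) a (fun n _ => q n) n with hlo_def
    have hlo0 : lo 0 = a := rfl
    have hlosucc : ∀ n, lo (n + 1) = q n := fun n => rfl
    have hlo_lt : ∀ n, lo n < q n := by
      intro n
      cases n with
      | zero => exact ha_lt_q 0
      | succ n => rw [hlosucc]; exact hq_mono (Nat.lt_succ_self n)
    have ha_le_lo : ∀ n, a ≤ lo n := by
      intro n
      cases n with
      | zero => exact le_rfl
      | succ n => rw [hlosucc]; exact (ha_lt_q n).le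
    -- block embeddings
    have hblocks : ∀ n : ℕ, ∃ g : {β : Ordinal // β < (s n - p n) + 1} → ℚ,
        StrictMono g ∧ (∀ β, lo n < g β ∧ g β ≤ q n) ∧
        (∀ h : (s n - p n) < (s n - p n) + 1, g ⟨s n - p n, h⟩ = q n) ∧
        ∀ l : {β : Ordinal // β < (s n - p n) + 1}, Order.IsSuccLimit l.1 →
          IsLUB (g '' {β | β < l}) (g l) :=
      fun n => IH (s n - p n) ((Ordinal.sub_le_self _ _).trans_lt (hs_lt n))
        ((Ordinal.card_le_card ((Ordinal.sub_le_self _ _).trans (hs_lt n).le)).trans hα)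
        (lo n) (q n) (hlo_lt n)
    choose g hg_mono hg_bdd hg_top hg_lub using hblocks
    -- the block index
    set N : Ordinal → ℕ := fun β => sInf {n | β ≤ s n} with hN_def
    have hN_mem : ∀ β, β < α → β ≤ s (N β) := fun β hβ => Nat.sInf_mem (hs_cof β hβ)
    have hN_min : ∀ β k, k < N β → ¬ β ≤ s k := fun β k hk => Nat.notMem_of_lt_sInf hk
    have hpN : ∀ β, p (N β) ≤ β := by
      intro β
      cases h : N β with
      | zero => rw [hp0]; exact zero_le (a := β)
      | succ k =>
        rw [hpsucc]
        exact aux_add_one_le_of_lt (not_le.mp (hN_min β k (by rw [h]; exact Nat.lt_succ_self k)))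
    have hN_eq : ∀ β n, p n ≤ β → β ≤ s n → N β = n := by
      intro β n h1 h2
      refine le_antisymm (Nat.sInf_le h2) (le_csInf ⟨n, h2⟩ ?_)
      intro m hm
      by_contra hc
      push_neg at hc
      cases n with
      | zero => exact absurd hc (Nat.not_lt_zero m)
      | succ k =>
        have h3 : s m ≤ s k := hs_mono.monotone (Nat.lt_succ_iff.mp hc)
        rw [hpsucc] at h1
        exact absurd ((h1.trans hm).trans h3) (aux_lt_add_one_self (s k)).not_ge
    have hbd : ∀ β, β < α → β - p (N β) < (s (N β) - p (N β)) + 1 := by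
      intro β hβ
      apply aux_lt_add_one_of_le
      rw [Ordinal.sub_le, hpds]
      exact hN_mem β hβ
    -- the function
    set f : {β : Ordinal // β < α + 1} → ℚ :=
      fun β => if hβ : β.1 < α then g (N β.1) ⟨β.1 - p (N β.1), hbd β.1 hβ⟩ else b with hf_def
    have hval : ∀ (x : {β : Ordinal // β < α + 1}) (hx : x.1 < α) (n : ℕ)
        (h1 : p n ≤ x.1) (h2 : x.1 ≤ s n) (h3 : x.1 - p n < (s n - p n) + 1),
        f x = g n ⟨x.1 - p n, h3⟩ := by
      rintro ⟨β, hh⟩ hx n h1 h2 h3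
      have hNn : N β = n := hN_eq β n h1 h2
      subst hNn
      simp only [hf_def, dif_pos hx]
    have hvaltop : ∀ (x : {β : Ordinal // β < α + 1}), ¬ x.1 < α → f x = b := by
      rintro ⟨β, hh⟩ h
      simp only [hf_def, dif_neg h]
    have hstop : ∀ (n : ℕ) (hh : s n < α + 1), f ⟨s n, hh⟩ = q n := by
      intro n hh
      rw [hval ⟨s n, hh⟩ (hs_lt n) n (hps n) le_rfl
        (by exact aux_lt_add_one_of_le (le_of_eq rfl))]
      exact hg_top n _
    -- strict monotonicity
    have hsm : StrictMono f := by
      intro x y hxy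
      have hxy' : x.1 < y.1 := hxy
      by_cases hy : y.1 < α
      · have hx : x.1 < α := hxy'.trans hy
        have hmn : N x.1 ≤ N y.1 := Nat.sInf_le (hxy'.le.trans (hN_mem y.1 hy))
        have hfx := hval x hx (N x.1) (hpN x.1) (hN_mem x.1 hx) (hbd x.1 hx)
        rcases Nat.lt_or_ge (N x.1) (N y.1) with hlt | hge
        · have hfy := hval y hy (N y.1) (hpN y.1) (hN_mem y.1 hy) (hbd y.1 hy)
          have h1 : f x ≤ q (N x.1) := by rw [hfx]; exact (hg_bdd _ _).2
          have h2 : lo (N y.1) < f y := by rw [hfy]; exact (hg_bdd _ _).1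
          have h3 : q (N x.1) ≤ lo (N y.1) := by
            obtain ⟨k, hk⟩ : ∃ k, N y.1 = k + 1 := ⟨N y.1 - 1, by omega⟩
            rw [hk, hlosucc]
            exact hq_mono.monotone (by omega)
          linarith
        · have heq : N x.1 = N y.1 := le_antisymm hmn hge
          have hfy := hval y hy (N x.1) (by rw [heq]; exact hpN y.1)
            (by rw [heq]; exact hN_mem y.1 hy) (by rw [heq]; exact hbd y.1 hy)
          rw [hfx, hfy]
          apply hg_mono
          show x.1 - p (N x.1) < y.1 - p (N x.1)
          have e1 : p (N x.1) + (x.1 - p (N x.1)) = x.1 :=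
            Ordinal.add_sub_cancel_of_le (hpN x.1)
          have e2 : p (N x.1) + (y.1 - p (N x.1)) = y.1 :=
            Ordinal.add_sub_cancel_of_le (by rw [heq]; exact hpN y.1)
          have h4 : p (N x.1) + (x.1 - p (N x.1)) < p (N x.1) + (y.1 - p (N x.1)) := by
            rw [e1, e2]; exact hxy'
          exact lt_of_add_lt_add_left h4
      · have hyα : y.1 = α := le_antisymm (aux_le_of_lt_add_one y.2) (not_lt.mp hy)
        have hx : x.1 < α := lt_of_lt_of_le hxy' hyα.le
        rw [hvaltop y hy, hval x hx (N x.1) (hpN x.1) (hN_mem x.1 hx) (hbd x.1 hx)]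
        exact lt_of_le_of_lt (hg_bdd _ _).2 (hq_lt_b _)
    -- bounds
    have hbdd : ∀ β, a < f β ∧ f β ≤ b := by
      intro β
      by_cases hβ : β.1 < α
      · rw [hval β hβ (N β.1) (hpN β.1) (hN_mem β.1 hβ) (hbd β.1 hβ)]
        exact ⟨lt_of_le_of_lt (ha_le_lo _) (hg_bdd _ _).1, (hg_bdd _ _).2.trans (hq_lt_b _).le⟩
      · rw [hvaltop β hβ]; exact ⟨hab, le_rfl⟩
    -- LUB at limits
    have hlub : ∀ l : {β : Ordinal // β < α + 1}, Order.IsSuccLimit l.1 →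
        IsLUB (f '' {β | β < l}) (f l) := by
      intro l hl
      by_cases hlα : l.1 < α
      · have hNl := hN_mem l.1 hlα
        have hpl := hpN l.1
        have h3 := hbd l.1 hlα
        have hfl := hval l hlα (N l.1) hpl hNl h3
        have hμsum : p (N l.1) + (l.1 - p (N l.1)) = l.1 := Ordinal.add_sub_cancel_of_le hpl
        have hμlim : Order.IsSuccLimit (l.1 - p (N l.1)) := by
          rcases Ordinal.zero_or_succ_or_isSuccLimit (l.1 - p (N l.1)) with h | ⟨ν, hν⟩ | h
          · exfalso
            rw [h, add_zero] at hμsum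
            cases hcase : N l.1 with
            | zero =>
              rw [hcase, hp0] at hμsum
              exact hl.pos.ne' hμsum.symm
            | succ k =>
              rw [hcase, hpsucc] at hμsum
              exact aux_not_isLimit_add_one (s k) (by rw [hμsum]; exact hl)
          · exfalso
            rw [← hν, ← Ordinal.add_one_eq_succ, ← add_assoc] at hμsum
            exact aux_not_isLimit_add_one _ (by rw [hμsum]; exact hl)
          · exact h
        constructor
        · rintro x ⟨β, hβ, rfl⟩
          exact (hsm hβ).le
        · intro c hc
          rw [hfl]
          refine (hg_lub (N l.1) ⟨l.1 - p (N l.1), h3⟩ hμlim).2 ?_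
          rintro x ⟨ν, hν, rfl⟩
          have hν' : ν.1 < l.1 - p (N l.1) := hν
          have hβl : p (N l.1) + ν.1 < l.1 := by
            calc p (N l.1) + ν.1 < p (N l.1) + (l.1 - p (N l.1)) := (add_lt_add_iff_left _).mpr hν'
            _ = l.1 := hμsum
          have hβα : p (N l.1) + ν.1 < α := hβl.trans hlα
          have hβs : p (N l.1) + ν.1 ≤ s (N l.1) := hβl.le.trans hNl
          have h3' : (p (N l.1) + ν.1) - p (N l.1) < (s (N l.1) - p (N l.1)) + 1 := by
            rw [Ordinal.add_sub_cancel]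
            exact aux_lt_add_one_of_le (aux_le_of_lt_add_one ν.2)
          have hveq := hval ⟨p (N l.1) + ν.1, hβα.trans (aux_lt_add_one_self α)⟩ hβα (N l.1)
            le_self_add hβs h3'
          have hgν : g (N l.1) ν = f ⟨p (N l.1) + ν.1, hβα.trans (aux_lt_add_one_self α)⟩ := by
            rw [hveq]
            congr 1
            exact Subtype.ext (Ordinal.add_sub_cancel _ _).symm
          rw [hgν]
          exact hc ⟨⟨p (N l.1) + ν.1, hβα.trans (aux_lt_add_one_self α)⟩, hβl, rfl⟩
      · have hlα' : l.1 = α := le_antisymm (aux_le_of_lt_add_one l.2) (not_lt.mp hlα)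
        rw [hvaltop l hlα]
        constructor
        · rintro x ⟨β, hβ, rfl⟩
          exact (hbdd β).2
        · intro c hc
          by_contra hbc
          push_neg at hbc
          obtain ⟨n, hn⟩ := hq_unbdd c hbc
          have hmem : f ⟨s n, (hs_lt n).trans (aux_lt_add_one_self α)⟩ ∈ f '' {β | β < l} := by
            refine ⟨⟨s n, (hs_lt n).trans (aux_lt_add_one_self α)⟩, ?_, rfl⟩
            show s n < l.1
            rw [hlα']
            exact hs_lt n
          have h7 := hc hmem
          rw [hstop n _] at h7
          exact absurd h7 (not_le.mpr hn)
    exact ⟨f, hsm, hbdd, fun h => hvaltop ⟨α, h⟩ (lt_irrefl α), hlub⟩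

/-- Every countable ordinal embeds into ℚ in a limit-preserving way. -/
theorem countable_ordinal_embeds_into_rat_preserving_limits (o : Ordinal)
    (ho : o.card ≤ Cardinal.aleph0) :
    ∃ f : {β : Ordinal // β < o} → ℚ, StrictMono f ∧
      ∀ l : {β : Ordinal // β < o}, Order.IsSuccLimit l.1 →
        IsLUB (f '' {β : {β : Ordinal // β < o} | β < l}) (f l) := by
  obtain ⟨f, hsm, hbdd, htop, hlub⟩ := key o ho 0 1 one_pos
  refine ⟨fun β => f ⟨β.1, β.2.trans (aux_lt_add_one_self o)⟩, ?_, ?_⟩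
  · intro x y hxy
    exact hsm (show (⟨x.1, x.2.trans (aux_lt_add_one_self o)⟩ : {β : Ordinal // β < o + 1}) <
      ⟨y.1, y.2.trans (aux_lt_add_one_self o)⟩ from hxy)
  · intro l hl
    have h := hlub ⟨l.1, l.2.trans (aux_lt_add_one_self o)⟩ hl
    have hset : f '' {β : {β : Ordinal // β < o + 1} | β < ⟨l.1, l.2.trans (aux_lt_add_one_self o)⟩}
        = (fun β : {β : Ordinal // β < o} => f ⟨β.1, β.2.trans (aux_lt_add_one_self o)⟩) ''
          {β : {β : Ordinal // β < o} | β < l} := by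
      ext x
      constructor
      · rintro ⟨β, hβ, rfl⟩
        have hβl : β.1 < l.1 := hβ
        exact ⟨⟨β.1, hβl.trans l.2⟩, hβl, rfl⟩
      · rintro ⟨β, hβ, rfl⟩
        exact ⟨⟨β.1, β.2.trans (aux_lt_add_one_self o)⟩, show β.1 < l.1 from hβ, rfl⟩
    rw [hset] at h
    exact h
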